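/- Let n be a natural number, let f : ℝⁿ → ℝⁿ be continuous, and let B : ℝⁿ → ℝ be continuously differentiable. Suppose that for every y ∈ ℝⁿ with B(y) = 0 one has ⟨∇B(y), f(y)⟩ < 0, where ∇B denotes the gradient of B. Let x : ℝ → ℝⁿ be differentiable with x'(t) = f(x(t)) for all t ≥ 0, and suppose B(x(0)) ≤ 0. Then B(x(t)) ≤ 0 for all t ≥ 0. -/

import Mathlib

theorem continuous_barrier_sublevel_invariant (n : ℕ)
    (f : EuclideanSpace ℝ (Fin n) → EuclideanSpace ℝ (Fin n))
    (hf : Continuous f)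
    (B : EuclideanSpace ℝ (Fin n) → ℝ)
    (hB : ContDiff ℝ 1 B)
    (hLie : ∀ y : EuclideanSpace ℝ (Fin n), B y = 0 →
      (inner ℝ (gradient B y) (f y) : ℝ) < 0)
    (x : ℝ → EuclideanSpace ℝ (Fin n))
    (hx : Differentiable ℝ x)
    (hode : ∀ t : ℝ, 0 ≤ t → deriv x t = f (x t))
    (h0 : B (x 0) ≤ 0) :
    ∀ t : ℝ, 0 ≤ t → B (x t) ≤ 0 := by
  set g : ℝ → ℝ := fun t => B (x t) with hg
  have hBdiff : Differentiable ℝ B := hB.differentiable one_ne_zero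
  have hgderiv : ∀ t : ℝ, 0 ≤ t →
      HasDerivAt g ((inner ℝ (gradient B (x t)) (f (x t)) : ℝ)) t := by
    intro t ht
    have hxd : HasDerivAt x (f (x t)) t := by
      have := (hx t).hasDerivAt
      rwa [hode t ht] at this
    have hBd : HasFDerivAt B (fderiv ℝ B (x t)) (x t) := (hBdiff (x t)).hasFDerivAt
    have hcomp := hBd.comp_hasDerivAt t hxd
    have heq : fderiv ℝ B (x t) (f (x t)) = (inner ℝ (gradient B (x t)) (f (x t)) : ℝ) := by
      rw [gradient, ← InnerProductSpace.toDual_apply_apply,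
        (InnerProductSpace.toDual ℝ (EuclideanSpace ℝ (Fin n))).apply_symm_apply]
    rwa [heq] at hcomp
  by_contra hcon
  push_neg at hcon
  obtain ⟨t₀, ht₀, hgt₀⟩ := hcon
  set S : Set ℝ := {u | u ∈ Set.Icc (0:ℝ) t₀ ∧ g u ≤ 0} with hS
  have hgc : Continuous g := hB.continuous.comp hx.continuous
  have hSne : S.Nonempty := ⟨0, ⟨le_rfl, ht₀⟩, h0⟩
  have hSclosed : IsClosed S :=
    (isClosed_Icc).inter (isClosed_le hgc continuous_const)
  have hSbdd : BddAbove S := ⟨t₀, fun u hu => hu.1.2⟩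
  set s := sSup S with hs
  have hsS : s ∈ S := hSclosed.csSup_mem hSne hSbdd
  have hs0 : 0 ≤ s := hsS.1.1
  have hst₀ : s < t₀ :=
    hsS.1.2.lt_of_ne (fun h => absurd (h ▸ hsS.2) (not_le.mpr hgt₀))
  -- eventually to the right of s, g < 0
  have hev : ∀ᶠ u in nhdsWithin s (Set.Ioi s), g u < 0 := by
    rcases lt_or_eq_of_le hsS.2 with hlt | heq
    · exact eventually_nhdsWithin_of_eventually_nhds
        (hgc.continuousAt.eventually_lt continuousAt_const hlt)
    · have hgs : g s = 0 := heq
      have hd : HasDerivAt g ((inner ℝ (gradient B (x s)) (f (x s)) : ℝ)) s := hgderiv s hs0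
      have hneg : (inner ℝ (gradient B (x s)) (f (x s)) : ℝ) < 0 := hLie (x s) hgs
      have hslope := hasDerivAt_iff_tendsto_slope.mp hd
      have hsl : ∀ᶠ u in nhdsWithin s {s}ᶜ, slope g s u < 0 :=
        hslope.eventually_lt_const hneg
      have hsl' : ∀ᶠ u in nhdsWithin s (Set.Ioi s), slope g s u < 0 :=
        nhdsWithin_mono s (fun u hu => ne_of_gt hu) hsl
      filter_upwards [hsl', self_mem_nhdsWithin] with u hu hus
      rw [slope_def_field, div_neg_iff] at hu
      rcases hu with ⟨_, hden⟩ | ⟨hnum, _⟩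
      · exact absurd (sub_pos.mpr hus) (not_lt.mpr hden.le)
      · linarith
  have hev2 : ∀ᶠ u in nhdsWithin s (Set.Ioi s), u < t₀ :=
    eventually_nhdsWithin_of_eventually_nhds (Filter.eventually_iff.mpr (by exact Iio_mem_nhds hst₀))
  have : ∃ u, u ∈ Set.Ioi s ∧ g u < 0 ∧ u < t₀ := by
    have := (hev.and hev2).and self_mem_nhdsWithin
    rcases this.exists with ⟨u, ⟨hgu, hut⟩, hus⟩
    exact ⟨u, hus, hgu, hut⟩
  obtain ⟨u, hus, hgu, hut⟩ := this
  have huS : u ∈ S := ⟨⟨le_trans hs0 (le_of_lt hus), hut.le⟩, hgu.le⟩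
  exact absurd (le_csSup hSbdd huS) (not_le.mpr hus)
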